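/- Let d, q be positive integers, let D be a real d × q matrix, ν ∈ ℝ^d, λ̄ ≥ 0 and γ̄ ≥ 0. Let η₀ ∈ ℝ^d be the (unique) global minimizer of g(η) = (1/2)‖η − ν‖₂² + λ̄‖Dᵀη‖₂. Then η̂ = max(1 − γ̄/‖η₀‖₂, 0) · η₀ (interpreted as 0 when η₀ = 0) is the (unique) global minimizer of f(η) = (1/2)‖η − ν‖₂² + λ̄‖Dᵀη‖₂ + γ̄‖η‖₂. -/

import Mathlib

set_option maxHeartbeats 1000000
open scoped RealInnerProductSpace

noncomputable def l2norm {ι : Type*} [Fintype ι] (v : ι → ℝ) : ℝ :=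
  Real.sqrt (∑ i, (v i) ^ 2)

lemma l2norm_eq_norm {ι : Type*} [Fintype ι] (v : ι → ℝ) :
    l2norm v = ‖(WithLp.equiv 2 (ι → ℝ)).symm v‖ := by
  rw [show ((WithLp.equiv 2 (ι → ℝ)).symm v) = ((WithLp.equiv 2 (∀ _ : ι, ℝ)).symm v : EuclideanSpace ℝ ι) from rfl]
  rw [EuclideanSpace.norm_eq]
  simp [l2norm, sq_abs]

lemma l2norm_smul {ι : Type*} [Fintype ι] (a : ℝ) (v : ι → ℝ) :
    l2norm (a • v) = |a| * l2norm v := by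
  rw [l2norm_eq_norm, l2norm_eq_norm,
    show (WithLp.equiv 2 (ι → ℝ)).symm (a • v) = a • (WithLp.equiv 2 (ι → ℝ)).symm v from rfl,
    norm_smul, Real.norm_eq_abs]

lemma l2norm_add_le {ι : Type*} [Fintype ι] (v w : ι → ℝ) :
    l2norm (v + w) ≤ l2norm v + l2norm w := by
  rw [l2norm_eq_norm, l2norm_eq_norm, l2norm_eq_norm,
    show (WithLp.equiv 2 (ι → ℝ)).symm (v + w)
      = (WithLp.equiv 2 (ι → ℝ)).symm v + (WithLp.equiv 2 (ι → ℝ)).symm w from rfl]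
  exact norm_add_le _ _

lemma aux_pos (P Q : ℝ) (hQ : 0 ≤ Q)
    (h : ∀ t : ℝ, 0 < t → t ≤ 1/2 → 0 ≤ t * P + t^2 * Q) : 0 ≤ P := by
  by_contra hP
  push_neg at hP
  have hden : (0:ℝ) < 2*Q+1 := by linarith
  set t := min (1/2 : ℝ) (-P / (2*Q+1)) with ht
  have ht1 : 0 < t := lt_min (by norm_num) (div_pos (by linarith) hden)
  have ht2 : t ≤ 1/2 := min_le_left _ _
  have ht3 : t ≤ -P / (2*Q+1) := min_le_right _ _
  have h0 := h t ht1 ht2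
  have h4 : t * (2*Q+1) ≤ -P := (le_div_iff₀ hden).mp ht3
  have h5 := mul_le_mul_of_nonneg_left h4 ht1.le
  nlinarith [h0, h5, mul_nonneg (sq_nonneg t) hQ, pow_pos ht1 2]

section key
variable {E : Type*} [NormedAddCommGroup E] [InnerProductSpace ℝ E]

lemma key_min (w x₀ : E) (lam gam : ℝ) (hlam : 0 ≤ lam) (hgam : 0 ≤ gam)
    (Φ : E → ℝ)
    (hΦs : ∀ (a : ℝ) (x : E), Φ (a • x) = |a| * Φ x)
    (hΦa : ∀ x y : E, Φ (x + y) ≤ Φ x + Φ y)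
    (hmin : ∀ x : E, (1/2)*‖x₀-w‖^2 + lam*Φ x₀ ≤ (1/2)*‖x-w‖^2 + lam*Φ x)
    (x : E) :
    (1/2)*‖(max (1 - gam / ‖x₀‖) 0) • x₀ - w‖^2
      + lam*Φ ((max (1 - gam / ‖x₀‖) 0) • x₀)
      + gam*‖(max (1 - gam / ‖x₀‖) 0) • x₀‖
    ≤ (1/2)*‖x-w‖^2 + lam*Φ x + gam*‖x‖ := by
  set r := ‖x₀‖ with hr
  set c := max (1 - gam / r) 0 with hc
  have hr0 : 0 ≤ r := norm_nonneg _
  have hc0 : 0 ≤ c := le_max_right _ _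
  set L := Φ x₀ with hL
  -- B = 0
  have expand : ∀ s : ℝ, ‖(1+s)•x₀ - w‖^2
      = ‖x₀ - w‖^2 + 2*s*⟪x₀ - w, x₀⟫ + s^2*r^2 := by
    intro s
    have h1 : (1+s)•x₀ - w = (x₀ - w) + s•x₀ := by module
    rw [h1, norm_add_sq_real, real_inner_smul_right, norm_smul, Real.norm_eq_abs, mul_pow, sq_abs]
    ring
  have hB : ⟪x₀ - w, x₀⟫ + lam * L = 0 := by
    set B : ℝ := ⟪x₀ - w, x₀⟫ + lam * L with hBdef
    have key : ∀ s : ℝ, |s| ≤ 1/2 → 0 ≤ s * B + s^2 * (r^2/2) := by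
      intro s hs
      obtain ⟨hs1, hs2⟩ := abs_le.mp hs
      have h2 := hmin ((1+s) • x₀)
      rw [expand s] at h2
      have h3 : Φ ((1+s)•x₀) = (1+s) * L := by
        rw [hΦs, abs_of_pos (by linarith)]
      rw [h3] at h2
      nlinarith [h2]
    have p1 : 0 ≤ B := by
      refine aux_pos B (r^2/2) (by positivity) (fun t ht1 ht2 => ?_)
      exact key t (by rw [abs_of_pos ht1]; exact ht2)
    have p2 : 0 ≤ -B := by
      refine aux_pos (-B) (r^2/2) (by positivity) (fun t ht1 ht2 => ?_)
      have := key (-t) (by rw [abs_neg, abs_of_pos ht1]; exact ht2)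
      nlinarith [this]
    linarith
  -- subgradient inequality
  have hsub : ∀ y : E, 0 ≤ ⟪y - x₀, x₀ - w⟫ + lam * (Φ y - L) := by
    intro y
    refine aux_pos _ ((1/2)*‖y - x₀‖^2) (by positivity) (fun t ht1 ht2 => ?_)
    have hconv : Φ (x₀ + t • (y - x₀)) ≤ (1-t)*L + t*Φ y := by
      have heq : x₀ + t•(y-x₀) = (1-t)•x₀ + t•y := by module
      rw [heq]
      calc Φ ((1-t)•x₀ + t•y) ≤ Φ ((1-t)•x₀) + Φ (t•y) := hΦa _ _
        _ = (1-t)*L + t*Φ y := by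
            rw [hΦs, hΦs, abs_of_pos (by linarith), abs_of_pos ht1]
    have h2 := hmin (x₀ + t•(y - x₀))
    have hexp : ‖x₀ + t•(y-x₀) - w‖^2
        = ‖x₀-w‖^2 + 2*t*⟪y - x₀, x₀ - w⟫ + t^2*‖y-x₀‖^2 := by
      have h : x₀ + t•(y-x₀) - w = (x₀ - w) + t•(y-x₀) := by module
      rw [h, norm_add_sq_real, real_inner_smul_right, norm_smul, Real.norm_eq_abs, mul_pow,
        sq_abs, real_inner_comm]
      ring
    rw [hexp] at h2
    nlinarith [h2, mul_le_mul_of_nonneg_left hconv hlam]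
  -- value at c • x₀
  have hΦc : Φ (c • x₀) = c * L := by rw [hΦs, abs_of_nonneg hc0]
  have hnc : ‖c • x₀‖ = c * r := by rw [norm_smul, Real.norm_eq_abs, abs_of_nonneg hc0]
  have hvc : ‖c•x₀ - w‖^2 = ‖x₀-w‖^2 + 2*(c-1)*⟪x₀ - w, x₀⟫ + (c-1)^2*r^2 := by
    have h : c•x₀ - w = (x₀ - w) + (c-1)•x₀ := by module
    rw [h, norm_add_sq_real, real_inner_smul_right, norm_smul, Real.norm_eq_abs, mul_pow, sq_abs]
    ring
  have hiw : ⟪x₀ - w, x₀⟫ = -(lam*L) := by linarith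
  have hval : (1/2)*‖c•x₀-w‖^2 + lam*Φ (c•x₀) + gam*‖c•x₀‖
      = (1/2)*‖x₀-w‖^2 + lam*L + (1/2)*(1-c)^2*r^2 + gam*(c*r) := by
    rw [hvc, hΦc, hnc, hiw]; ring
  have hxexp : ‖x - w‖^2 = ‖x₀-w‖^2 + 2*⟪x - x₀, x₀ - w⟫ + ‖x - x₀‖^2 := by
    have h : x - w = (x₀ - w) + (x - x₀) := by abel
    rw [h, norm_add_sq_real, real_inner_comm]
  have hCS : ‖x‖^2 - 2*‖x‖*r + r^2 ≤ ‖x - x₀‖^2 := by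
    have h1 : ‖x - x₀‖^2 = ‖x‖^2 - 2*⟪x, x₀⟫ + r^2 := by
      rw [norm_sub_sq_real]
    have h2 : ⟪x, x₀⟫ ≤ ‖x‖ * r := real_inner_le_norm x x₀
    nlinarith
  have hscalar : (1/2)*(1-c)^2*r^2 + gam*(c*r) ≤ (1/2)*(‖x‖ - r)^2 + gam*‖x‖ := by
    set s := ‖x‖ with hs
    have hs0 : 0 ≤ s := norm_nonneg x
    rcases eq_or_lt_of_le hr0 with h0 | h0
    · rw [← h0]
      nlinarith
    · rcases le_or_gt gam r with hgr | hgr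
      · have hcval : c = 1 - gam / r := by
          rw [hc]; exact max_eq_left (by rw [sub_nonneg]; exact div_le_one_of_le₀ hgr hr0)
        have hrne : r ≠ 0 := ne_of_gt h0
        have e1 : c * r = r - gam := by
          rw [hcval, sub_mul, one_mul, div_mul_cancel₀ _ hrne]
        have e2 : (1-c) * r = gam := by nlinarith [e1]
        nlinarith [sq_nonneg (s - r + gam)]
      · have hcval : c = 0 := by
          rw [hc]; refine max_eq_right ?_
          rw [sub_nonpos]
          rw [le_div_iff₀ h0]; linarith
        rw [hcval]
        nlinarith
  have hsx := hsub x
  nlinarith [hval, hxexp, hsx, hCS, hscalar]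

lemma key_unique (w : E) (lam gam : ℝ) (hlam : 0 ≤ lam) (hgam : 0 ≤ gam)
    (Φ : E → ℝ)
    (hΦs : ∀ (a : ℝ) (x : E), Φ (a • x) = |a| * Φ x)
    (hΦa : ∀ x y : E, Φ (x + y) ≤ Φ x + Φ y)
    (y z : E)
    (hy : ∀ x, (1/2)*‖y-w‖^2 + lam*Φ y + gam*‖y‖ ≤ (1/2)*‖x-w‖^2 + lam*Φ x + gam*‖x‖)
    (hz : ∀ x, (1/2)*‖z-w‖^2 + lam*Φ z + gam*‖z‖ ≤ (1/2)*‖x-w‖^2 + lam*Φ x + gam*‖x‖) :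
    y = z := by
  set m := (1/2 : ℝ) • (y + z) with hm
  have hmid : ‖m - w‖^2 = (1/2)*‖y-w‖^2 + (1/2)*‖z-w‖^2 - (1/4)*‖y-z‖^2 := by
    have h1 : m - w = (1/2:ℝ) • ((y-w) + (z-w)) := by rw [hm]; module
    have hp := parallelogram_law_with_norm ℝ (y-w) (z-w)
    have h2 : (y-w) - (z-w) = y - z := by abel
    rw [h2] at hp
    rw [h1, norm_smul, Real.norm_eq_abs, mul_pow, sq_abs]
    nlinarith [hp]
  have hΦm : Φ m ≤ (1/2)*Φ y + (1/2)*Φ z := by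
    have h1 : m = (1/2:ℝ)•y + (1/2:ℝ)•z := by rw [hm]; module
    rw [h1]
    calc Φ ((1/2:ℝ)•y + (1/2:ℝ)•z) ≤ Φ ((1/2:ℝ)•y) + Φ ((1/2:ℝ)•z) := hΦa _ _
      _ = (1/2)*Φ y + (1/2)*Φ z := by rw [hΦs, hΦs, abs_of_pos (by norm_num : (0:ℝ) < 1/2)]
  have hnm : ‖m‖ ≤ (1/2)*‖y‖ + (1/2)*‖z‖ := by
    have h1 : m = (1/2:ℝ)•y + (1/2:ℝ)•z := by rw [hm]; module
    rw [h1]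
    calc ‖(1/2:ℝ)•y + (1/2:ℝ)•z‖ ≤ ‖(1/2:ℝ)•y‖ + ‖(1/2:ℝ)•z‖ := norm_add_le _ _
      _ = (1/2)*‖y‖ + (1/2)*‖z‖ := by rw [norm_smul, norm_smul]; norm_num
  have hyz : (1/2)*‖y-w‖^2 + lam*Φ y + gam*‖y‖ = (1/2)*‖z-w‖^2 + lam*Φ z + gam*‖z‖ :=
    le_antisymm (hy z) (hz y)
  have hym := hy m
  have hsq : ‖y - z‖^2 ≤ 0 := by
    nlinarith [hym, hmid, hyz, mul_le_mul_of_nonneg_left hΦm hlam,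
      mul_le_mul_of_nonneg_left hnm hgam]
  have : ‖y - z‖ = 0 := by
    have := sq_nonneg ‖y - z‖
    have h := le_antisymm hsq (sq_nonneg _)
    exact pow_eq_zero_iff (by norm_num) |>.mp h
  exact sub_eq_zero.mp (norm_eq_zero.mp this)

end key

/-- Group-soft-thresholding composition: if `η₀` globally minimizes
`g(η) = (1/2)‖η − ν‖₂² + λ̄‖Dᵀη‖₂`, then
`η̂ = max(1 − γ̄/‖η₀‖₂, 0)·η₀` is the unique global minimizer of
`f(η) = (1/2)‖η − ν‖₂² + λ̄‖Dᵀη‖₂ + γ̄‖η‖₂`. -/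
theorem prox_soft_threshold_composition
    (d q : ℕ) (hd : 0 < d) (hq : 0 < q)
    (D : Matrix (Fin d) (Fin q) ℝ) (ν : Fin d → ℝ)
    (lamBar gamBar : ℝ) (hlam : 0 ≤ lamBar) (hgam : 0 ≤ gamBar)
    (f g : (Fin d → ℝ) → ℝ)
    (hf : ∀ η, f η = (1 / 2) * (l2norm (fun i => η i - ν i)) ^ 2
        + lamBar * l2norm (D.transpose.mulVec η) + gamBar * l2norm η)
    (hg : ∀ η, g η = (1 / 2) * (l2norm (fun i => η i - ν i)) ^ 2
        + lamBar * l2norm (D.transpose.mulVec η))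
    (η₀ : Fin d → ℝ) (hη₀ : ∀ η, g η₀ ≤ g η)
    (ηhat : Fin d → ℝ)
    (hηhat : ηhat = max (1 - gamBar / l2norm η₀) 0 • η₀) :
    (∀ η, f ηhat ≤ f η) ∧ (∀ η, (∀ η', f η ≤ f η') → η = ηhat) := by
  set e : (Fin d → ℝ) → EuclideanSpace ℝ (Fin d) :=
    fun v => (WithLp.equiv 2 (Fin d → ℝ)).symm v with he
  set e' : EuclideanSpace ℝ (Fin d) → (Fin d → ℝ) :=
    fun x => (WithLp.equiv 2 (Fin d → ℝ)) x with he'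
  have hee : ∀ x, e (e' x) = x := fun x => (WithLp.equiv 2 (Fin d → ℝ)).symm_apply_apply x
  have he'e : ∀ v, e' (e v) = v := fun v => (WithLp.equiv 2 (Fin d → ℝ)).apply_symm_apply v
  set Φ : EuclideanSpace ℝ (Fin d) → ℝ :=
    fun x => l2norm (D.transpose.mulVec (e' x)) with hΦdef
  have hl2 : ∀ v : Fin d → ℝ, l2norm v = ‖e v‖ := fun v => l2norm_eq_norm v
  have hΦs : ∀ (a : ℝ) (x : EuclideanSpace ℝ (Fin d)), Φ (a • x) = |a| * Φ x := by
    intro a x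
    have h1 : e' (a • x) = a • e' x := rfl
    rw [hΦdef]
    simp only [h1, Matrix.mulVec_smul]
    exact l2norm_smul a _
  have hΦa : ∀ x y : EuclideanSpace ℝ (Fin d), Φ (x + y) ≤ Φ x + Φ y := by
    intro x y
    have h1 : e' (x + y) = e' x + e' y := rfl
    rw [hΦdef]
    simp only [h1, Matrix.mulVec_add]
    exact l2norm_add_le _ _
  have hfF : ∀ η, f η = (1/2)*‖e η - e ν‖^2 + lamBar * Φ (e η) + gamBar * ‖e η‖ := by
    intro η
    rw [hf]
    have h1 : (fun i => η i - ν i) = η - ν := rfl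
    have h2 : e (η - ν) = e η - e ν := rfl
    rw [h1, hl2, h2, hΦdef]
    simp only [he'e]
    rw [hl2 η]
  have hgG : ∀ η, g η = (1/2)*‖e η - e ν‖^2 + lamBar * Φ (e η) := by
    intro η
    rw [hg]
    have h1 : (fun i => η i - ν i) = η - ν := rfl
    have h2 : e (η - ν) = e η - e ν := rfl
    rw [h1, hl2, h2, hΦdef]
    simp only [he'e]
  have hmin : ∀ x : EuclideanSpace ℝ (Fin d),
      (1/2)*‖e η₀ - e ν‖^2 + lamBar*Φ (e η₀) ≤ (1/2)*‖x - e ν‖^2 + lamBar*Φ x := by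
    intro x
    have := hη₀ (e' x)
    rwa [hgG, hgG, hee] at this
  have hch : e ηhat = (max (1 - gamBar / ‖e η₀‖) 0) • e η₀ := by
    rw [hηhat, hl2 η₀]
    rfl
  have hminF : ∀ x : EuclideanSpace ℝ (Fin d),
      (1/2)*‖e ηhat - e ν‖^2 + lamBar * Φ (e ηhat) + gamBar * ‖e ηhat‖
        ≤ (1/2)*‖x - e ν‖^2 + lamBar * Φ x + gamBar * ‖x‖ := by
    intro x
    rw [hch]
    exact key_min (e ν) (e η₀) lamBar gamBar hlam hgam Φ hΦs hΦa hmin x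
  constructor
  · intro η
    rw [hfF, hfF]
    exact hminF (e η)
  · intro η hη
    have hy : ∀ x : EuclideanSpace ℝ (Fin d),
        (1/2)*‖e η - e ν‖^2 + lamBar * Φ (e η) + gamBar * ‖e η‖
          ≤ (1/2)*‖x - e ν‖^2 + lamBar * Φ x + gamBar * ‖x‖ := by
      intro x
      have := hη (e' x)
      rwa [hfF, hfF, hee] at this
    have : e η = e ηhat :=
      key_unique (e ν) lamBar gamBar hlam hgam Φ hΦs hΦa (e η) (e ηhat) hy hminF
    have := congrArg e' this
    rwa [he'e, he'e] at this
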